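/- Let S₁, ..., S_m be strings (m ≥ 1) and let $₁, ..., $_{m−1} be pairwise distinct symbols not occurring in any S_i. Let S = S₁ $₁ S₂ $₂ ⋯ $_{m−1} S_m. Then for every k ≥ 1, d_k(S) ≤ (m−1)·k + Σ_{i=1}^{m} d_k(S_i). -/

import Mathlib

/-- The set of distinct length-`k` contiguous substrings of `S`. -/
def substrings {α : Type} [DecidableEq α] (S : List α) (k : ℕ) : Finset (List α) :=
  ((Finset.range (S.length + 1)).image (fun i => (S.drop i).take k)).filter
    (fun t => t.length = k)

/-- `d_k(S)`: the number of distinct length-`k` substrings of `S`. -/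
def subCount {α : Type} [DecidableEq α] (S : List α) (k : ℕ) : ℕ :=
  (substrings S k).card

/-- The measure `δ(S) = max { d_k(S)/k : 1 ≤ k ≤ |S| }` (with value 0 for the empty string). -/
def delta {α : Type} [DecidableEq α] (S : List α) : ℚ :=
  if h : S = [] then 0
  else
    (Finset.Icc 1 S.length).sup'
      (Finset.nonempty_Icc.mpr (Nat.one_le_iff_ne_zero.mpr
        (fun h0 => h (List.length_eq_zero_iff.mp h0))))
      (fun k => (subCount S k : ℚ) / k)

/-- `joinSep [S₁, ..., S_m] [c₁, ..., c_{m−1}] = S₁ c₁ S₂ c₂ ⋯ c_{m−1} S_m`: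
concatenation of the strings interleaved with the separator symbols. -/
def joinSep {α : Type} : List (List α) → List α → List α
  | [], _ => []
  | [T], _ => T
  | T :: Ts, [] => T ++ joinSep Ts []
  | T :: Ts, c :: cs => T ++ c :: joinSep Ts cs

lemma mem_substrings_iff {α : Type} [DecidableEq α] {S w : List α} {k : ℕ} :
    w ∈ substrings S k ↔ (∃ i, w = (S.drop i).take k) ∧ w.length = k := by
  unfold substrings
  simp only [Finset.mem_filter, Finset.mem_image, Finset.mem_range, Nat.lt_succ_iff,
    decide_eq_true_eq]
  constructor
  · rintro ⟨⟨i, _, rfl⟩, h2⟩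
    exact ⟨⟨i, rfl⟩, h2⟩
  · rintro ⟨⟨i, rfl⟩, h2⟩
    refine ⟨⟨min i S.length, min_le_right _ _, ?_⟩, h2⟩
    rcases le_or_gt i S.length with h | h
    · rw [min_eq_left h]
    · rw [min_eq_right h.le, List.drop_length, List.drop_eq_nil_of_le h.le]

lemma subCount_sep {α : Type} [DecidableEq α] (T R : List α) (c : α)
    (hT : c ∉ T) (hR : c ∉ R) (k : ℕ) :
    subCount (T ++ c :: R) k ≤ k + (subCount T k + subCount R k) := by
  set S := T ++ c :: R with hS
  set p := T.length with hp
  have hsub : substrings S k ⊆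
      ((Finset.range k).image (fun j => (S.drop (p - j)).take k)) ∪
        (substrings T k ∪ substrings R k) := by
    intro w hw
    obtain ⟨⟨i, hwi⟩, hwk⟩ := mem_substrings_iff.mp hw
    have hdrop : S.drop i = T.drop i ++ (c :: R).drop (i - p) := by
      rw [hS, List.drop_append]
    by_cases hci : c ∈ w
    · -- w contains the separator
      have hip : i ≤ p := by
        by_contra h
        push_neg at h
        have h1 : i - p = (i - p - 1) + 1 := by omega
        rw [hdrop, List.drop_eq_nil_of_le (by omega : T.length ≤ i), h1,
          List.drop_succ_cons, List.nil_append] at hwi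
        have hm1 : c ∈ R.drop (i - p - 1) :=
          List.Sublist.mem (hwi ▸ hci) (List.take_sublist _ _)
        exact hR (List.Sublist.mem hm1 (List.drop_sublist _ _))
      have hdrop2 : S.drop i = T.drop i ++ (c :: R) := by
        rw [hdrop, Nat.sub_eq_zero_of_le hip, List.drop_zero]
      have hlen : (T.drop i).length = p - i := by simp [hp]
      have hjk : p - i < k := by
        by_contra h
        push_neg at h
        rw [hdrop2, List.take_append, hlen,
          Nat.sub_eq_zero_of_le (by omega : k ≤ p - i), List.take_zero,
          List.append_nil] at hwi
        exact hT ((List.drop_sublist _ _).mem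
          ((List.take_sublist _ _).mem (hwi ▸ hci)))
      refine Finset.mem_union_left _ (Finset.mem_image.mpr ⟨p - i, Finset.mem_range.mpr hjk, ?_⟩)
      have : p - (p - i) = i := by omega
      rw [this, ← hwi]
    · -- w omits the separator
      refine Finset.mem_union_right _ ?_
      rcases le_or_gt i p with hip | hip
      · -- substring of T
        have hdrop2 : S.drop i = T.drop i ++ (c :: R) := by
          rw [hdrop, Nat.sub_eq_zero_of_le hip, List.drop_zero]
        have hlen : (T.drop i).length = p - i := by simp [hp]
        have hkle : k ≤ p - i := by
          by_contra h
          push_neg at h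
          have h1 : k - (p - i) = (k - (p - i) - 1) + 1 := by omega
          rw [hdrop2, List.take_append, hlen, h1, List.take_succ_cons] at hwi
          exact hci (hwi ▸ (List.mem_append.mpr (Or.inr (List.mem_cons_self))))
        refine Finset.mem_union_left _ (mem_substrings_iff.mpr ⟨⟨i, ?_⟩, hwk⟩)
        rw [hwi, hdrop2, List.take_append, hlen,
          Nat.sub_eq_zero_of_le hkle, List.take_zero, List.append_nil]
      · -- substring of R
        refine Finset.mem_union_right _ (mem_substrings_iff.mpr ⟨⟨i - p - 1, ?_⟩, hwk⟩)
        have h1 : i - p = (i - p - 1) + 1 := by omega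
        rw [hwi, hdrop, List.drop_eq_nil_of_le (by omega : T.length ≤ i), h1,
          List.drop_succ_cons, List.nil_append]
        congr 2 <;> omega
  calc subCount S k ≤ _ := Finset.card_le_card hsub
    _ ≤ ((Finset.range k).image (fun j => (S.drop (p - j)).take k)).card +
          (substrings T k ∪ substrings R k).card := Finset.card_union_le _ _
    _ ≤ k + (subCount T k + subCount R k) := by
        refine Nat.add_le_add ?_ ?_
        · exact (Finset.card_image_le).trans (by simp)
        · exact Finset.card_union_le _ _

lemma mem_joinSep {α : Type} {x : α} :
    ∀ (Ts : List (List α)) (cs : List α), x ∈ joinSep Ts cs →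
      (∃ T ∈ Ts, x ∈ T) ∨ x ∈ cs
  | [], cs, h => by simp [joinSep] at h
  | [T], cs, h => by
      simp only [joinSep] at h
      exact Or.inl ⟨T, by simp, h⟩
  | T :: T' :: Ts, [], h => by
      simp only [joinSep, List.mem_append] at h
      rcases h with h | h
      · exact Or.inl ⟨T, by simp, h⟩
      · rcases mem_joinSep (T' :: Ts) [] h with ⟨U, hU, hx⟩ | h
        · exact Or.inl ⟨U, List.mem_cons_of_mem _ hU, hx⟩
        · exact Or.inr h
  | T :: T' :: Ts, c :: cs, h => by
      simp only [joinSep, List.mem_append, List.mem_cons] at h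
      rcases h with h | h | h
      · exact Or.inl ⟨T, by simp, h⟩
      · exact Or.inr (h ▸ List.mem_cons_self)
      · rcases mem_joinSep (T' :: Ts) cs h with ⟨U, hU, hx⟩ | h
        · exact Or.inl ⟨U, List.mem_cons_of_mem _ hU, hx⟩
        · exact Or.inr (List.mem_cons_of_mem _ h)

/-- If `S = S₁ $₁ S₂ $₂ ⋯ $_{m−1} S_m` where the separators `$₁, ..., $_{m−1}` are
pairwise distinct symbols occurring in no `S_i`, then for every `k ≥ 1`,
`d_k(S) ≤ (m−1)·k + Σᵢ d_k(Sᵢ)`. -/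
theorem subCount_joinSep_le {α : Type} [DecidableEq α]
    (Ss : List (List α)) (seps : List α)
    (hm : 1 ≤ Ss.length) (hlen : seps.length + 1 = Ss.length)
    (hnd : seps.Nodup) (hsep : ∀ c ∈ seps, ∀ T ∈ Ss, c ∉ T)
    (k : ℕ) (hk : 1 ≤ k) :
    subCount (joinSep Ss seps) k ≤
      (Ss.length - 1) * k + (Ss.map (fun T => subCount T k)).sum := by
  induction seps generalizing Ss with
  | nil =>
      obtain ⟨T, rfl⟩ := List.length_eq_one_iff.mp hlen.symm
      simp [joinSep]
  | cons c cs ih =>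
      match Ss with
      | [] => simp at hlen
      | [T] => simp at hlen
      | T :: T' :: Ts =>
        have hjoin : joinSep (T :: T' :: Ts) (c :: cs) = T ++ c :: joinSep (T' :: Ts) cs := rfl
        have hcT : c ∉ T := hsep c (by simp) T (by simp)
        have hcJ : c ∉ joinSep (T' :: Ts) cs := by
          intro h
          rcases mem_joinSep _ _ h with ⟨U, hU, hx⟩ | h
          · exact hsep c (by simp) U (List.mem_cons_of_mem _ hU) hx
          · exact (List.nodup_cons.mp hnd).1 h
        have h1 := subCount_sep T (joinSep (T' :: Ts) cs) c hcT hcJ k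
        have h2 := ih (T' :: Ts) (by simp) (by simpa using hlen)
          (List.nodup_cons.mp hnd).2
          (fun d hd U hU => hsep d (List.mem_cons_of_mem _ hd) U (List.mem_cons_of_mem _ hU))
        rw [hjoin]
        have hlen' : (T' :: Ts).length = cs.length + 1 := by simpa using hlen.symm
        calc subCount (T ++ c :: joinSep (T' :: Ts) cs) k
            ≤ k + (subCount T k + subCount (joinSep (T' :: Ts) cs) k) := h1
          _ ≤ k + (subCount T k + (((T' :: Ts).length - 1) * k +
                ((T' :: Ts).map (fun U => subCount U k)).sum)) := by
              exact Nat.add_le_add_left (Nat.add_le_add_left h2 _) _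
          _ = ((T :: T' :: Ts).length - 1) * k +
                ((T :: T' :: Ts).map (fun U => subCount U k)).sum := by
              simp [hlen']
              ring
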